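/- Let f : T → T be a Weyl-group-equivariant map on the diagonal subgroup T of U(N) (or SU(N)). If a matrix W has two diagonalizations W = XDX⁻¹ = YEY⁻¹ with D, E ∈ T and X, Y ∈ G, then X f(D) X⁻¹ = Y f(E) Y⁻¹. Hence f extends to a well-defined conjugation-equivariant map F on all of G, and F is invertible whenever f is. -/

import Mathlib

open Matrix

section Helpers
open Polynomial

lemma exists_perm_of_ofFn_perm {α : Type*} : ∀ {n : ℕ} (d e : Fin n → α),
    (List.ofFn d).Perm (List.ofFn e) → ∃ σ : Equiv.Perm (Fin n), ∀ i, d (σ i) = e i := by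
  intro n
  induction n with
  | zero => exact fun d e _ => ⟨1, fun i => i.elim0⟩
  | succ n ih =>
    intro d e h
    have h0 : e 0 ∈ List.ofFn d := h.symm.subset (by simp [List.mem_ofFn])
    rw [List.mem_ofFn] at h0
    obtain ⟨k, hk⟩ := h0
    have hperm : (List.ofFn (d ∘ Equiv.swap 0 k)).Perm (List.ofFn e) :=
      (Equiv.Perm.ofFn_comp_perm _ d).trans h
    have hhead : (d ∘ Equiv.swap 0 k) 0 = e 0 := by simp [hk]
    rw [List.ofFn_succ, List.ofFn_succ, hhead] at hperm
    obtain ⟨σ', hσ'⟩ := ih (fun i => (d ∘ Equiv.swap 0 k) i.succ) (fun i => e i.succ)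
      hperm.cons_inv
    refine ⟨(Equiv.Perm.decomposeFin.symm (0, σ')).trans (Equiv.swap 0 k), ?_⟩
    intro i
    cases i using Fin.cases with
    | zero => simpa using hk
    | succ j => simpa using hσ' j

lemma star_permMatrix {N : ℕ} (σ : Equiv.Perm (Fin N)) :
    star (σ.permMatrix ℂ) = (σ⁻¹).permMatrix ℂ := by
  ext i j
  simp only [Equiv.Perm.permMatrix, Matrix.star_apply, PEquiv.toMatrix_apply,
    Equiv.toPEquiv_apply, Option.mem_some_iff]
  by_cases h : σ j = i
  · have h2 : σ⁻¹ i = j := by rw [← h]; exact σ.symm_apply_apply j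
    simp [h, h2]
  · have h' : σ⁻¹ i ≠ j := fun hc => h (by rw [← hc]; exact σ.apply_symm_apply i)
    simp [h]; exact h'

lemma permMatrix_mem_unitary {N : ℕ} (σ : Equiv.Perm (Fin N)) :
    σ.permMatrix ℂ ∈ Matrix.unitaryGroup (Fin N) ℂ := by
  rw [Matrix.mem_unitaryGroup_iff]
  rw [star_permMatrix]
  simp only [Equiv.Perm.permMatrix]
  rw [← PEquiv.toMatrix_trans, ← Equiv.toPEquiv_trans]
  rw [show (σ.trans σ⁻¹) = Equiv.refl (Fin N) by ext x; simp, Equiv.toPEquiv_refl,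
    PEquiv.toMatrix_refl]

lemma permMatrix_conj_diagonal {N : ℕ} (σ : Equiv.Perm (Fin N)) (d : Fin N → ℂ) :
    σ.permMatrix ℂ * Matrix.diagonal d * star (σ.permMatrix ℂ) =
      Matrix.diagonal (d ∘ σ) := by
  rw [star_permMatrix]
  simp only [Equiv.Perm.permMatrix]
  rw [PEquiv.toMatrix_toPEquiv_mul, PEquiv.mul_toMatrix_toPEquiv]
  have h1 : (⇑(Equiv.symm σ⁻¹) : Fin N → Fin N) = ⇑σ := rfl
  rw [Matrix.submatrix_submatrix, Function.comp_id, Function.id_comp, h1,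
    Matrix.submatrix_diagonal_equiv]

lemma permMatrix_conj_isDiag {N : ℕ} (σ : Equiv.Perm (Fin N))
    {A : Matrix (Fin N) (Fin N) ℂ} (ha : A.IsDiag) :
    (σ.permMatrix ℂ * A * star (σ.permMatrix ℂ)).IsDiag := by
  rw [← ha.diagonal_diag, permMatrix_conj_diagonal]
  exact Matrix.isDiag_diagonal _

lemma charpoly_diagonal {N : ℕ} (d : Fin N → ℂ) :
    (Matrix.diagonal d).charpoly = ∏ i, (X - C (d i)) := by
  rw [Matrix.charpoly]
  have : charmatrix (Matrix.diagonal d) = Matrix.diagonal (fun i => (X : ℂ[X]) - C (d i)) := by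
    ext i j
    by_cases h : i = j
    · subst h; simp [charmatrix_apply_eq]
    · simp [charmatrix_apply_ne _ _ _ h, Matrix.diagonal_apply_ne _ h,
        Matrix.diagonal_apply_ne' _ (Ne.symm h)]
  rw [this, Matrix.det_diagonal]

lemma charpoly_unitary_conj {N : ℕ} (Z A : Matrix (Fin N) (Fin N) ℂ)
    (hZ : Z ∈ Matrix.unitaryGroup (Fin N) ℂ) :
    (Z * A * star Z).charpoly = A.charpoly := by
  have h1 : Z * star Z = 1 := (Matrix.mem_unitaryGroup_iff.mp hZ)
  have h2 : star Z * Z = 1 := (Matrix.mem_unitaryGroup_iff'.mp hZ)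
  have key : charmatrix (Z * A * star Z) =
      (Z.map C) * charmatrix A * ((star Z).map C) := by
    simp only [charmatrix]
    rw [Matrix.mul_sub, Matrix.sub_mul]
    congr 1
    · have hs : (Matrix.scalar (Fin N)) (X : ℂ[X]) =
          (X : ℂ[X]) • (1 : Matrix (Fin N) (Fin N) ℂ[X]) := by
        ext i j; by_cases h : i = j <;> simp [Matrix.scalar_apply, h, Matrix.one_apply,
          Matrix.diagonal_apply]
      rw [hs, Matrix.mul_smul, Matrix.smul_mul, mul_one, ← Matrix.map_mul, h1,
        Matrix.map_one _ (map_zero C) (map_one C)]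
    · rw [RingHom.mapMatrix_apply, RingHom.mapMatrix_apply, ← Matrix.map_mul, ← Matrix.map_mul]
  rw [Matrix.charpoly, Matrix.charpoly, key, Matrix.det_mul, Matrix.det_mul]
  rw [mul_comm, ← mul_assoc, ← Matrix.det_mul, ← Matrix.map_mul, h2]
  simp

lemma exists_perm_of_conj {N : ℕ} (Z : Matrix (Fin N) (Fin N) ℂ) (d e : Fin N → ℂ)
    (hZ : Z ∈ Matrix.unitaryGroup (Fin N) ℂ)
    (h : Z * Matrix.diagonal d * star Z = Matrix.diagonal e) :
    ∃ σ : Equiv.Perm (Fin N), ∀ i, d (σ i) = e i := by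
  have hc : (∏ i, ((X:ℂ[X]) - C (d i))) = ∏ i, ((X:ℂ[X]) - C (e i)) := by
    rw [← charpoly_diagonal, ← charpoly_diagonal, ← h, charpoly_unitary_conj _ _ hZ]
  have hm : (Finset.univ.val.map d) = (Finset.univ.val.map e) := by
    have h1 := congrArg Polynomial.roots hc
    rwa [Finset.prod_eq_multiset_prod, Finset.prod_eq_multiset_prod,
      show (Finset.univ.val.map fun i => (X:ℂ[X]) - C (d i)) =
        ((Finset.univ.val.map d).map fun a => (X:ℂ[X]) - C a) by rw [Multiset.map_map]; rfl,
      show (Finset.univ.val.map fun i => (X:ℂ[X]) - C (e i)) =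
        ((Finset.univ.val.map e).map fun a => (X:ℂ[X]) - C a) by rw [Multiset.map_map]; rfl,
      roots_multiset_prod_X_sub_C, roots_multiset_prod_X_sub_C] at h1
  apply exists_perm_of_ofFn_perm
  rw [← Multiset.coe_eq_coe]
  have hof : ∀ f : Fin N → ℂ, (↑(List.ofFn f) : Multiset ℂ) = Finset.univ.val.map f := by
    intro f
    rw [List.ofFn_eq_map, ← Multiset.map_coe]
    congr 1
  rw [hof, hof]; exact hm

variable {N : ℕ} (f : Matrix (Fin N) (Fin N) ℂ → Matrix (Fin N) (Fin N) ℂ)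

lemma fD_const
    (hfT : ∀ D : Matrix (Fin N) (Fin N) ℂ, D.IsDiag → D ∈ Matrix.unitaryGroup (Fin N) ℂ →
      (f D).IsDiag ∧ f D ∈ Matrix.unitaryGroup (Fin N) ℂ)
    (hequiv : ∀ (σ : Equiv.Perm (Fin N)) (D : Matrix (Fin N) (Fin N) ℂ),
      D.IsDiag → D ∈ Matrix.unitaryGroup (Fin N) ℂ →
      f (σ.permMatrix ℂ * D * star (σ.permMatrix ℂ)) =
        σ.permMatrix ℂ * f D * star (σ.permMatrix ℂ))
    (D : Matrix (Fin N) (Fin N) ℂ) (hd : D.IsDiag) (hu : D ∈ Matrix.unitaryGroup (Fin N) ℂ)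
    (i j : Fin N) (hij : D i i = D j j) : f D i i = f D j j := by
  set σ := Equiv.swap i j with hσ
  have hfix : σ.permMatrix ℂ * D * star (σ.permMatrix ℂ) = D := by
    conv_lhs => rw [← hd.diagonal_diag]
    rw [permMatrix_conj_diagonal]
    conv_rhs => rw [← hd.diagonal_diag]
    apply congrArg Matrix.diagonal
    funext k
    show D (σ k) (σ k) = D k k
    by_cases hki : k = i
    · subst hki; rw [hσ, Equiv.swap_apply_left]; exact hij.symm
    · by_cases hkj : k = j
      · subst hkj; rw [hσ, Equiv.swap_apply_right]; exact hij
      · rw [hσ, Equiv.swap_apply_of_ne_of_ne hki hkj]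
  have h := hequiv σ D hd hu
  rw [hfix] at h
  have hdiag : (f D).IsDiag := (hfT D hd hu).1
  have h2 : f D = Matrix.diagonal ((f D).diag ∘ σ) := by
    conv_lhs => rw [h, ← hdiag.diagonal_diag, permMatrix_conj_diagonal]
  have := congrFun (congrFun h2 i) i
  simpa [Matrix.diagonal_apply_eq, Matrix.diag, hσ] using this

lemma mul_diag_apply {D U : Matrix (Fin N) (Fin N) ℂ} (hd : D.IsDiag) (i j : Fin N) :
    (U * D) i j = U i j * D j j ∧ (D * U) i j = D i i * U i j := by
  constructor
  · rw [Matrix.mul_apply]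
    rw [Finset.sum_eq_single j]
    · intro k _ hk; rw [hd hk, mul_zero]
    · intro hj; exact absurd (Finset.mem_univ j) hj
  · rw [Matrix.mul_apply]
    rw [Finset.sum_eq_single i]
    · intro k _ hk; rw [hd (Ne.symm hk), zero_mul]
    · intro hj; exact absurd (Finset.mem_univ i) hj

lemma commute_transfer {D A U : Matrix (Fin N) (Fin N) ℂ} (hd : D.IsDiag) (ha : A.IsDiag)
    (hconst : ∀ i j, D i i = D j j → A i i = A j j)
    (hU : U * D = D * U) : U * A = A * U := by
  ext i j
  have h1 := congrFun (congrFun hU i) j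
  rw [(mul_diag_apply hd i j).1, (mul_diag_apply hd i j).2] at h1
  rw [(mul_diag_apply ha i j).1, (mul_diag_apply ha i j).2]
  by_cases h : D i i = D j j
  · rw [hconst i j h, mul_comm]
  · have h0 : U i j = 0 := by
      by_contra hne
      exact h (mul_left_cancel₀ hne (h1.trans (mul_comm _ _))).symm
    rw [h0, zero_mul, mul_zero]

lemma conj_f
    (hfT : ∀ D : Matrix (Fin N) (Fin N) ℂ, D.IsDiag → D ∈ Matrix.unitaryGroup (Fin N) ℂ →
      (f D).IsDiag ∧ f D ∈ Matrix.unitaryGroup (Fin N) ℂ)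
    (hequiv : ∀ (σ : Equiv.Perm (Fin N)) (D : Matrix (Fin N) (Fin N) ℂ),
      D.IsDiag → D ∈ Matrix.unitaryGroup (Fin N) ℂ →
      f (σ.permMatrix ℂ * D * star (σ.permMatrix ℂ)) =
        σ.permMatrix ℂ * f D * star (σ.permMatrix ℂ))
    (Z D E : Matrix (Fin N) (Fin N) ℂ)
    (hZ : Z ∈ Matrix.unitaryGroup (Fin N) ℂ)
    (hd : D.IsDiag) (hDu : D ∈ Matrix.unitaryGroup (Fin N) ℂ)
    (he : E.IsDiag) (hEu : E ∈ Matrix.unitaryGroup (Fin N) ℂ)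
    (h : Z * D * star Z = E) : Z * f D * star Z = f E := by
  obtain ⟨σ, hσ⟩ := exists_perm_of_conj Z D.diag E.diag hZ
    (by rw [hd.diagonal_diag, he.diagonal_diag]; exact h)
  set P := σ.permMatrix ℂ with hP
  have hPu : P ∈ Matrix.unitaryGroup (Fin N) ℂ := permMatrix_mem_unitary σ
  have hP1 : star P * P = 1 := Matrix.mem_unitaryGroup_iff'.mp hPu
  have hP2 : P * star P = 1 := Matrix.mem_unitaryGroup_iff.mp hPu
  have hPD : P * D * star P = E := by
    conv_lhs => rw [← hd.diagonal_diag, permMatrix_conj_diagonal]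
    conv_rhs => rw [← he.diagonal_diag]
    exact congrArg Matrix.diagonal (funext fun i => hσ i)
  have hfE : f E = P * f D * star P := by rw [← hPD]; exact hequiv σ D hd hDu
  set U := star P * Z with hU
  have hUu : U ∈ Matrix.unitaryGroup (Fin N) ℂ := mul_mem (Unitary.star_mem hPu) hZ
  have hU1 : star U * U = 1 := Matrix.mem_unitaryGroup_iff'.mp hUu
  have hU2 : U * star U = 1 := Matrix.mem_unitaryGroup_iff.mp hUu
  have hUD : U * D * star U = D := by
    have hstarU : star U = star Z * P := by rw [hU, StarMul.star_mul, star_star]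
    rw [hU, hstarU]
    calc star P * Z * D * (star Z * P) = star P * (Z * D * star Z) * P := by
          simp only [Matrix.mul_assoc]
      _ = star P * (P * D * star P) * P := by rw [h, hPD]
      _ = (star P * P) * D * (star P * P) := by simp only [Matrix.mul_assoc]
      _ = D := by rw [hP1, one_mul, Matrix.mul_one]
  have hcomm : U * D = D * U := by
    have := congrArg (fun M => M * U) hUD
    simpa only [Matrix.mul_assoc, hU1, Matrix.mul_one] using this
  have hUf : U * f D = f D * U :=
    commute_transfer hd (hfT D hd hDu).1
      (fun i j hij => fD_const f hfT hequiv D hd hDu i j hij) hcomm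
  have hUfD : U * f D * star U = f D := by
    rw [hUf, Matrix.mul_assoc, hU2, Matrix.mul_one]
  have hZPU : Z = P * U := by rw [hU, ← Matrix.mul_assoc, hP2, one_mul]
  rw [hZPU, StarMul.star_mul]
  calc P * U * f D * (star U * star P) = P * (U * f D * star U) * star P := by
        simp only [Matrix.mul_assoc]
    _ = P * f D * star P := by rw [hUfD]
    _ = f E := hfE.symm

lemma well_defined
    (hfT : ∀ D : Matrix (Fin N) (Fin N) ℂ, D.IsDiag → D ∈ Matrix.unitaryGroup (Fin N) ℂ →
      (f D).IsDiag ∧ f D ∈ Matrix.unitaryGroup (Fin N) ℂ)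
    (hequiv : ∀ (σ : Equiv.Perm (Fin N)) (D : Matrix (Fin N) (Fin N) ℂ),
      D.IsDiag → D ∈ Matrix.unitaryGroup (Fin N) ℂ →
      f (σ.permMatrix ℂ * D * star (σ.permMatrix ℂ)) =
        σ.permMatrix ℂ * f D * star (σ.permMatrix ℂ))
    (X Y D E : Matrix (Fin N) (Fin N) ℂ)
    (hX : X ∈ Matrix.unitaryGroup (Fin N) ℂ) (hY : Y ∈ Matrix.unitaryGroup (Fin N) ℂ)
    (hd : D.IsDiag) (hDu : D ∈ Matrix.unitaryGroup (Fin N) ℂ)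
    (he : E.IsDiag) (hEu : E ∈ Matrix.unitaryGroup (Fin N) ℂ)
    (h : X * D * star X = Y * E * star Y) :
    X * f D * star X = Y * f E * star Y := by
  have hY1 : star Y * Y = 1 := Matrix.mem_unitaryGroup_iff'.mp hY
  have hY2 : Y * star Y = 1 := Matrix.mem_unitaryGroup_iff.mp hY
  set Z := star Y * X with hZ
  have hZu : Z ∈ Matrix.unitaryGroup (Fin N) ℂ := mul_mem (Unitary.star_mem hY) hX
  have hsZ : star Z = star X * Y := by rw [hZ, StarMul.star_mul, star_star]
  have hZDZ : Z * D * star Z = E := by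
    rw [hZ, hsZ]
    calc star Y * X * D * (star X * Y) = star Y * (X * D * star X) * Y := by
          simp only [Matrix.mul_assoc]
      _ = star Y * (Y * E * star Y) * Y := by rw [h]
      _ = (star Y * Y) * E * (star Y * Y) := by simp only [Matrix.mul_assoc]
      _ = E := by rw [hY1, one_mul, Matrix.mul_one]
  have hkey := conj_f f hfT hequiv Z D E hZu hd hDu he hEu hZDZ
  have hYZ : Y * Z = X := by rw [hZ, ← Matrix.mul_assoc, hY2, one_mul]
  have hsX : star X = star Z * star Y := by
    rw [← hYZ, StarMul.star_mul]
  calc X * f D * star X = Y * Z * f D * (star Z * star Y) := by rw [hYZ, hsX]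
    _ = Y * (Z * f D * star Z) * star Y := by simp only [Matrix.mul_assoc]
    _ = Y * f E * star Y := by rw [hkey]

/-- `W` admits a unitary diagonalization. -/
def GoodDec {N : ℕ} (W : Matrix (Fin N) (Fin N) ℂ) : Prop :=
  ∃ X : Matrix (Fin N) (Fin N) ℂ, ∃ D : Matrix (Fin N) (Fin N) ℂ,
    X ∈ Matrix.unitaryGroup (Fin N) ℂ ∧ D.IsDiag ∧ D ∈ Matrix.unitaryGroup (Fin N) ℂ ∧
      W = X * D * star X

open scoped Classical in
/-- The extension of `f` to all of `U(N)`. -/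
noncomputable def ExtU {N : ℕ} (f : Matrix (Fin N) (Fin N) ℂ → Matrix (Fin N) (Fin N) ℂ)
    (W : Matrix (Fin N) (Fin N) ℂ) : Matrix (Fin N) (Fin N) ℂ :=
  if h : GoodDec W then h.choose * f h.choose_spec.choose * star h.choose else W

lemma ext_not {W : Matrix (Fin N) (Fin N) ℂ} (h : ¬ GoodDec W) : ExtU f W = W := by
  rw [ExtU, dif_neg h]

lemma ext_spec
    (hfT : ∀ D : Matrix (Fin N) (Fin N) ℂ, D.IsDiag → D ∈ Matrix.unitaryGroup (Fin N) ℂ →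
      (f D).IsDiag ∧ f D ∈ Matrix.unitaryGroup (Fin N) ℂ)
    (hequiv : ∀ (σ : Equiv.Perm (Fin N)) (D : Matrix (Fin N) (Fin N) ℂ),
      D.IsDiag → D ∈ Matrix.unitaryGroup (Fin N) ℂ →
      f (σ.permMatrix ℂ * D * star (σ.permMatrix ℂ)) =
        σ.permMatrix ℂ * f D * star (σ.permMatrix ℂ))
    (X D : Matrix (Fin N) (Fin N) ℂ)
    (hX : X ∈ Matrix.unitaryGroup (Fin N) ℂ)
    (hd : D.IsDiag) (hDu : D ∈ Matrix.unitaryGroup (Fin N) ℂ) :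
    ExtU f (X * D * star X) = X * f D * star X := by
  have hg : GoodDec (X * D * star X) := ⟨X, D, hX, hd, hDu, rfl⟩
  rw [ExtU, dif_pos hg]
  obtain ⟨hX', hd', hDu', hW⟩ := hg.choose_spec.choose_spec
  exact well_defined f hfT hequiv hg.choose X hg.choose_spec.choose D hX' hX hd' hDu' hd hDu
    hW.symm

lemma ext_mapsTo {W : Matrix (Fin N) (Fin N) ℂ}
    (hfT : ∀ D : Matrix (Fin N) (Fin N) ℂ, D.IsDiag → D ∈ Matrix.unitaryGroup (Fin N) ℂ →
      (f D).IsDiag ∧ f D ∈ Matrix.unitaryGroup (Fin N) ℂ)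
    (hW : W ∈ Matrix.unitaryGroup (Fin N) ℂ) : ExtU f W ∈ Matrix.unitaryGroup (Fin N) ℂ := by
  by_cases h : GoodDec W
  · rw [ExtU, dif_pos h]
    obtain ⟨hX', hd', hDu', _⟩ := h.choose_spec.choose_spec
    exact mul_mem (mul_mem hX' (hfT _ hd' hDu').2) (Unitary.star_mem hX')
  · rw [ext_not f h]; exact hW

lemma ext_conj
    (hfT : ∀ D : Matrix (Fin N) (Fin N) ℂ, D.IsDiag → D ∈ Matrix.unitaryGroup (Fin N) ℂ →
      (f D).IsDiag ∧ f D ∈ Matrix.unitaryGroup (Fin N) ℂ)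
    (hequiv : ∀ (σ : Equiv.Perm (Fin N)) (D : Matrix (Fin N) (Fin N) ℂ),
      D.IsDiag → D ∈ Matrix.unitaryGroup (Fin N) ℂ →
      f (σ.permMatrix ℂ * D * star (σ.permMatrix ℂ)) =
        σ.permMatrix ℂ * f D * star (σ.permMatrix ℂ))
    (W X : Matrix (Fin N) (Fin N) ℂ)
    (hW : W ∈ Matrix.unitaryGroup (Fin N) ℂ) (hX : X ∈ Matrix.unitaryGroup (Fin N) ℂ) :
    ExtU f (X * W * star X) = X * ExtU f W * star X := by
  by_cases h : GoodDec W
  · obtain ⟨Y, D, hYu, hd, hDu, rfl⟩ := h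
    have e1 : X * (Y * D * star Y) * star X = (X * Y) * D * star (X * Y) := by
      rw [StarMul.star_mul]; simp only [Matrix.mul_assoc]
    rw [e1, ext_spec f hfT hequiv _ _ (mul_mem hX hYu) hd hDu,
      ext_spec f hfT hequiv _ _ hYu hd hDu, StarMul.star_mul]
    simp only [Matrix.mul_assoc]
  · have hX1 : star X * X = 1 := Matrix.mem_unitaryGroup_iff'.mp hX
    have h2 : ¬ GoodDec (X * W * star X) := by
      rintro ⟨X', D', hX', hd', hD', hWe⟩
      apply h
      refine ⟨star X * X', D', mul_mem (Unitary.star_mem hX) hX', hd', hD', ?_⟩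
      have hWrec : W = star X * (X * W * star X) * X := by
        calc W = 1 * W * 1 := by rw [one_mul, Matrix.mul_one]
          _ = (star X * X) * W * (star X * X) := by rw [hX1]
          _ = star X * (X * W * star X) * X := by simp only [Matrix.mul_assoc]
      rw [hWrec, hWe, StarMul.star_mul, star_star]
      simp only [Matrix.mul_assoc]
    rw [ext_not f h2, ext_not f h]

end Helpers

/-- Let `T` be the diagonal subgroup of `U(N)` and let `f : T → T`
be equivariant under the Weyl group (permutation of diagonal entries,
implemented by conjugation with permutation matrices).  If `W = X D X⁻¹ = Y E Y⁻¹`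
are two diagonalizations of the same matrix (with `X, Y` unitary and `D, E`
diagonal unitary), then `X f(D) X⁻¹ = Y f(E) Y⁻¹`.  Hence `f` extends to a
well-defined map `F` on all of `U(N)` satisfying `F (X D X⁻¹) = X f(D) X⁻¹`,
which is conjugation-equivariant, and which is a bijection of `U(N)` whenever
`f` is a bijection of `T`. -/
theorem perm_equivariant_extends_to_conj_equivariant
    {N : ℕ} (f : Matrix (Fin N) (Fin N) ℂ → Matrix (Fin N) (Fin N) ℂ)
    (hfT : ∀ D : Matrix (Fin N) (Fin N) ℂ, D.IsDiag → D ∈ Matrix.unitaryGroup (Fin N) ℂ →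
      (f D).IsDiag ∧ f D ∈ Matrix.unitaryGroup (Fin N) ℂ)
    (hequiv : ∀ (σ : Equiv.Perm (Fin N)) (D : Matrix (Fin N) (Fin N) ℂ),
      D.IsDiag → D ∈ Matrix.unitaryGroup (Fin N) ℂ →
      f (σ.permMatrix ℂ * D * star (σ.permMatrix ℂ)) =
        σ.permMatrix ℂ * f D * star (σ.permMatrix ℂ)) :
    (∀ X Y D E : Matrix (Fin N) (Fin N) ℂ,
      X ∈ Matrix.unitaryGroup (Fin N) ℂ → Y ∈ Matrix.unitaryGroup (Fin N) ℂ →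
      D.IsDiag → D ∈ Matrix.unitaryGroup (Fin N) ℂ →
      E.IsDiag → E ∈ Matrix.unitaryGroup (Fin N) ℂ →
      X * D * star X = Y * E * star Y →
      X * f D * star X = Y * f E * star Y)
    ∧ ∃ F : Matrix (Fin N) (Fin N) ℂ → Matrix (Fin N) (Fin N) ℂ,
        (∀ X D : Matrix (Fin N) (Fin N) ℂ,
          X ∈ Matrix.unitaryGroup (Fin N) ℂ →
          D.IsDiag → D ∈ Matrix.unitaryGroup (Fin N) ℂ →
          F (X * D * star X) = X * f D * star X) ∧
        (∀ W X : Matrix (Fin N) (Fin N) ℂ,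
          W ∈ Matrix.unitaryGroup (Fin N) ℂ → X ∈ Matrix.unitaryGroup (Fin N) ℂ →
          F (X * W * star X) = X * F W * star X) ∧
        (Set.BijOn f {D | D.IsDiag ∧ D ∈ Matrix.unitaryGroup (Fin N) ℂ}
            {D | D.IsDiag ∧ D ∈ Matrix.unitaryGroup (Fin N) ℂ} →
          Set.BijOn F (Matrix.unitaryGroup (Fin N) ℂ : Set (Matrix (Fin N) (Fin N) ℂ))
            (Matrix.unitaryGroup (Fin N) ℂ : Set (Matrix (Fin N) (Fin N) ℂ))) := by
  classical
  refine ⟨well_defined f hfT hequiv, ExtU f, ext_spec f hfT hequiv, ext_conj f hfT hequiv, ?_⟩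
  intro hbij
  set S : Set (Matrix (Fin N) (Fin N) ℂ) :=
    {D | D.IsDiag ∧ D ∈ Matrix.unitaryGroup (Fin N) ℂ} with hS
  set g : Matrix (Fin N) (Fin N) ℂ → Matrix (Fin N) (Fin N) ℂ :=
    fun A => if h : A ∈ S then (hbij.2.2 h).choose else A with hg
  have hg1 : ∀ A ∈ S, g A ∈ S ∧ f (g A) = A := by
    intro A hA
    rw [hg]; simp only [dif_pos hA]
    exact ⟨(hbij.2.2 hA).choose_spec.1, (hbij.2.2 hA).choose_spec.2⟩
  have hg2 : ∀ D ∈ S, g (f D) = D := by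
    intro D hD
    have hfD : f D ∈ S := hbij.1 hD
    exact hbij.2.1 (hg1 (f D) hfD).1 hD (hg1 (f D) hfD).2
  have hgT : ∀ D : Matrix (Fin N) (Fin N) ℂ, D.IsDiag → D ∈ Matrix.unitaryGroup (Fin N) ℂ →
      (g D).IsDiag ∧ g D ∈ Matrix.unitaryGroup (Fin N) ℂ := by
    intro D hd hDu
    exact (hg1 D ⟨hd, hDu⟩).1
  have hgequiv : ∀ (σ : Equiv.Perm (Fin N)) (D : Matrix (Fin N) (Fin N) ℂ),
      D.IsDiag → D ∈ Matrix.unitaryGroup (Fin N) ℂ →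
      g (σ.permMatrix ℂ * D * star (σ.permMatrix ℂ)) =
        σ.permMatrix ℂ * g D * star (σ.permMatrix ℂ) := by
    intro σ D hd hDu
    have hDS : D ∈ S := ⟨hd, hDu⟩
    have hPu := permMatrix_mem_unitary σ
    have hconjS : σ.permMatrix ℂ * D * star (σ.permMatrix ℂ) ∈ S :=
      ⟨permMatrix_conj_isDiag σ hd, mul_mem (mul_mem hPu hDu) (Unitary.star_mem hPu)⟩
    have hgDS := (hg1 D hDS).1
    have hPgDS : σ.permMatrix ℂ * g D * star (σ.permMatrix ℂ) ∈ S :=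
      ⟨permMatrix_conj_isDiag σ hgDS.1, mul_mem (mul_mem hPu hgDS.2) (Unitary.star_mem hPu)⟩
    apply hbij.2.1 (hg1 _ hconjS).1 hPgDS
    rw [(hg1 _ hconjS).2, hequiv σ (g D) hgDS.1 hgDS.2, (hg1 D hDS).2]
  have hmapF : Set.MapsTo (ExtU f) (Matrix.unitaryGroup (Fin N) ℂ : Set _)
      (Matrix.unitaryGroup (Fin N) ℂ : Set _) := fun W hW => ext_mapsTo f hfT hW
  have hmapG : Set.MapsTo (ExtU g) (Matrix.unitaryGroup (Fin N) ℂ : Set _)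
      (Matrix.unitaryGroup (Fin N) ℂ : Set _) := fun W hW => ext_mapsTo g hgT hW
  have hleft : Set.LeftInvOn (ExtU g) (ExtU f) (Matrix.unitaryGroup (Fin N) ℂ : Set _) := by
    intro W hW
    by_cases h : GoodDec W
    · obtain ⟨X, D, hX, hd, hDu, rfl⟩ := h
      rw [ext_spec f hfT hequiv X D hX hd hDu,
        ext_spec g hgT hgequiv X (f D) hX (hfT D hd hDu).1 (hfT D hd hDu).2,
        hg2 D ⟨hd, hDu⟩]
    · rw [ext_not f h, ext_not g h]
  have hright : Set.RightInvOn (ExtU g) (ExtU f) (Matrix.unitaryGroup (Fin N) ℂ : Set _) := by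
    intro W hW
    by_cases h : GoodDec W
    · obtain ⟨X, D, hX, hd, hDu, rfl⟩ := h
      have hgD := (hg1 D ⟨hd, hDu⟩).1
      rw [ext_spec g hgT hgequiv X D hX hd hDu,
        ext_spec f hfT hequiv X (g D) hX hgD.1 hgD.2,
        (hg1 D ⟨hd, hDu⟩).2]
    · rw [ext_not g h, ext_not f h]
  exact Set.InvOn.bijOn ⟨hleft, hright⟩ hmapF hmapG
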